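/- Let k be a positive integer and n ∈ {1,…,2^{k−1}}. For every x with (n−1)/2^{k−1} ≤ x ≤ n/2^{k−1}, writing θ = 2^k x − 2n + 1, the second integral of the degree-zero Chebyshev wavelet satisfies ∫₀^x ∫₀^u φ_{n0}(τ) dτ du = γ_0 2^{−3(k−1)/2 − 4} [ T_2(θ) + 4 T_1(θ) + 3 T_0(θ) ]. -/

import Mathlib

open Real intervalIntegral MeasureTheory

/-- Normalizing constant of the Chebyshev wavelets: `γ 0 = √(2/π)`, `γ m = 2/√π` for `m ≥ 1`. -/
noncomputable def chebGamma (m : ℕ) : ℝ :=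
  if m = 0 then Real.sqrt (2 / Real.pi) else 2 / Real.sqrt Real.pi

/-- **Second integral of the degree-zero Chebyshev wavelet, middle case (Eq. (2.15)).**
For `x` in the support interval, with `θ = 2^k x − 2n + 1`,
`∫₀^x ∫₀^u φ_{n0}(τ) dτ du = γ_0 2^{−3(k−1)/2−4} [T_2(θ) + 4T_1(θ) + 3T_0(θ)]`. -/
theorem chebyshev_wavelet_second_integral_deg_zero
    (k n : ℕ) (hk : 0 < k) (hn1 : 1 ≤ n) (hn2 : n ≤ 2 ^ (k - 1))
    (x : ℝ) (hx1 : ((n : ℝ) - 1) / 2 ^ (k - 1) ≤ x) (hx2 : x ≤ (n : ℝ) / 2 ^ (k - 1)) :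
    ∫ u in (0 : ℝ)..x, ∫ τ in (0 : ℝ)..u,
        (if ((n : ℝ) - 1) / 2 ^ (k - 1) ≤ τ ∧ τ < (n : ℝ) / 2 ^ (k - 1) then
          chebGamma 0 * (2 : ℝ) ^ (((k : ℝ) - 1) / 2) *
            (Polynomial.Chebyshev.T ℝ 0).eval ((2 : ℝ) ^ k * τ - 2 * n + 1)
        else 0)
      = chebGamma 0 * (2 : ℝ) ^ (-3 * ((k : ℝ) - 1) / 2 - 4) *
          ((Polynomial.Chebyshev.T ℝ 2).eval ((2 : ℝ) ^ k * x - 2 * n + 1)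
            + 4 * (Polynomial.Chebyshev.T ℝ 1).eval ((2 : ℝ) ^ k * x - 2 * n + 1)
            + 3 * (Polynomial.Chebyshev.T ℝ 0).eval ((2 : ℝ) ^ k * x - 2 * n + 1)) := by
  have hT0 : (Polynomial.Chebyshev.T ℝ 0) = 1 := Polynomial.Chebyshev.T_zero ℝ
  simp only [hT0, Polynomial.eval_one, mul_one]
  set a : ℝ := ((n : ℝ) - 1) / 2 ^ (k - 1) with ha
  set b : ℝ := (n : ℝ) / 2 ^ (k - 1) with hb
  set c : ℝ := chebGamma 0 * (2 : ℝ) ^ (((k : ℝ) - 1) / 2) with hc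
  set f : ℝ → ℝ := fun τ => if a ≤ τ ∧ τ < b then c else 0 with hf
  have hP : (0:ℝ) < 2 ^ (k-1) := by positivity
  have hn1' : (1:ℝ) ≤ (n:ℝ) := by exact_mod_cast hn1
  have ha0 : 0 ≤ a := div_nonneg (by linarith) hP.le
  have hax : a ≤ x := hx1
  have hxb : x ≤ b := hx2
  have h0x : (0:ℝ) ≤ x := le_trans ha0 hax
  have hfInd : f = (Set.Ico a b).indicator fun _ => c := by
    ext τ; simp [hf, Set.indicator, Set.mem_Ico]
  have hfInt : ∀ p q : ℝ, IntervalIntegrable f volume p q := by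
    intro p q
    rw [hfInd, intervalIntegrable_iff]
    exact ((integrableOn_const_iff (C := c)).mpr (Or.inr measure_Ioc_lt_top)).indicator measurableSet_Ico
  have hne : ∀ y : ℝ, ∀ᵐ τ : ℝ, τ ≠ y := by
    intro y
    refine ae_iff.mpr ?_
    simp [Real.volume_singleton]
  have hinner : Set.EqOn (fun u => ∫ τ in (0:ℝ)..u, f τ)
      (fun u => c * max (u - a) 0) (Set.uIcc (0:ℝ) x) := by
    intro u hu
    rw [Set.uIcc_of_le h0x] at hu
    obtain ⟨hu0, hux⟩ := hu
    by_cases hua : u ≤ a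
    · have h1 : (∫ τ in (0:ℝ)..u, f τ) = ∫ τ in (0:ℝ)..u, (0:ℝ) := by
        apply intervalIntegral.integral_congr_ae
        filter_upwards [hne a] with τ hτ hτu
        rw [Set.uIoc_of_le hu0] at hτu
        show (if a ≤ τ ∧ τ < b then c else 0) = 0
        rw [if_neg]
        rintro ⟨h1, h2⟩
        exact hτ (le_antisymm (le_trans hτu.2 hua) h1)
      simp only [h1, intervalIntegral.integral_zero]
      rw [max_eq_right (by linarith)]
      ring
    · push_neg at hua
      have hsplit : (∫ τ in (0:ℝ)..u, f τ)
          = (∫ τ in (0:ℝ)..a, f τ) + ∫ τ in a..u, f τ :=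
        (intervalIntegral.integral_add_adjacent_intervals (hfInt 0 a) (hfInt a u)).symm
      have h1 : (∫ τ in (0:ℝ)..a, f τ) = 0 := by
        have : (∫ τ in (0:ℝ)..a, f τ) = ∫ τ in (0:ℝ)..a, (0:ℝ) := by
          apply intervalIntegral.integral_congr_ae
          filter_upwards [hne a] with τ hτ hτu
          rw [Set.uIoc_of_le ha0] at hτu
          show (if a ≤ τ ∧ τ < b then c else 0) = 0
          rw [if_neg]
          rintro ⟨hA, hB⟩
          exact hτ (le_antisymm hτu.2 hA)
        simpa using this
      have h2 : (∫ τ in a..u, f τ) = ∫ τ in a..u, c := by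
        apply intervalIntegral.integral_congr_ae
        filter_upwards [hne b] with τ hτ hτu
        rw [Set.uIoc_of_le hua.le] at hτu
        show (if a ≤ τ ∧ τ < b then c else 0) = c
        rw [if_pos]
        exact ⟨hτu.1.le, lt_of_le_of_ne (le_trans hτu.2 (le_trans hux hxb)) hτ⟩
      show (∫ τ in (0:ℝ)..u, f τ) = c * max (u - a) 0
      rw [hsplit, h1, h2, intervalIntegral.integral_const, zero_add, smul_eq_mul,
        max_eq_left (by linarith)]
      ring
  rw [intervalIntegral.integral_congr hinner]
  have hg : Continuous fun u : ℝ => c * max (u - a) 0 :=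
    continuous_const.mul ((continuous_id.sub continuous_const).max continuous_const)
  have hsplit2 : (∫ u in (0:ℝ)..x, c * max (u - a) 0)
      = (∫ u in (0:ℝ)..a, c * max (u - a) 0) + ∫ u in a..x, c * max (u - a) 0 :=
    (intervalIntegral.integral_add_adjacent_intervals
      (hg.intervalIntegrable 0 a) (hg.intervalIntegrable a x)).symm
  have h3 : (∫ u in (0:ℝ)..a, c * max (u - a) 0) = 0 := by
    have : (∫ u in (0:ℝ)..a, c * max (u - a) 0) = ∫ u in (0:ℝ)..a, (0:ℝ) := by
      apply intervalIntegral.integral_congr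
      intro u hu
      rw [Set.uIcc_of_le ha0] at hu
      simp [max_eq_right (by linarith [hu.2] : u - a ≤ 0)]
    simpa using this
  have h4 : (∫ u in a..x, c * max (u - a) 0) = c * ((x - a)^2 / 2) := by
    have : (∫ u in a..x, c * max (u - a) 0) = ∫ u in a..x, c * (u - a) := by
      apply intervalIntegral.integral_congr
      intro u hu
      rw [Set.uIcc_of_le hax] at hu
      simp [max_eq_left (by linarith [hu.1] : (0:ℝ) ≤ u - a)]
    rw [this, intervalIntegral.integral_const_mul]
    have h5 : (∫ u in a..x, (u - a)) = (x - a)^2 / 2 := by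
      have := intervalIntegral.integral_comp_sub_right (a := a) (b := x) (fun u => u) a
      rw [this, sub_self, integral_id]
      ring
    rw [h5]
  rw [hsplit2, h3, h4, zero_add]
  -- algebra
  have hT2 : ((Polynomial.Chebyshev.T ℝ 2).eval ((2:ℝ) ^ k * x - 2 * n + 1))
      = 2 * ((2:ℝ) ^ k * x - 2 * n + 1)^2 - 1 := by
    simp [Polynomial.Chebyshev.T_two]
  have hT1 : ((Polynomial.Chebyshev.T ℝ 1).eval ((2:ℝ) ^ k * x - 2 * n + 1))
      = (2:ℝ) ^ k * x - 2 * n + 1 := by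
    simp [Polynomial.Chebyshev.T_one]
  rw [hT2, hT1]
  set P : ℝ := (2:ℝ) ^ (k - 1) with hPdef
  have hk2 : (2:ℝ) ^ k = 2 * P := by
    rw [hPdef, ← pow_succ']
    congr 1
    omega
  have hPr : P = (2:ℝ) ^ ((k:ℝ) - 1) := by
    rw [hPdef, ← Real.rpow_natCast 2 (k-1)]
    congr 1
    have : ((k - 1 : ℕ) : ℝ) = (k:ℝ) - 1 := by
      push_cast [Nat.cast_sub hk]; ring
    rw [this]
  have hkey : (2:ℝ) ^ (((k:ℝ)-1)/2) = (2:ℝ) ^ (-3*((k:ℝ)-1)/2 - 4) * (P*P) * 16 := by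
    have h16 : (16:ℝ) = (2:ℝ) ^ (4:ℝ) := by
      rw [show (4:ℝ) = ((4:ℕ):ℝ) by norm_num, Real.rpow_natCast]; norm_num
    rw [hPr, h16, ← Real.rpow_add (by norm_num : (0:ℝ) < 2),
      ← Real.rpow_add (by norm_num : (0:ℝ) < 2), ← Real.rpow_add (by norm_num : (0:ℝ) < 2)]
    congr 1
    ring
  rw [hc, hk2, hkey, ha]
  have hPne : P ≠ 0 := by positivity
  field_simp
  ring
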